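/- Let h : ℕ → ℕ be monotonically increasing and satisfy condition (a). Suppose x, y, z ∈ ℕ satisfy x ⊕ y ⊕ z = 0 and y ≤ h(z). Then: (i) u ⊕ y ⊕ z ≠ 0 for every u < x; (ii) x ⊕ v ⊕ z ≠ 0 for every v < y; (iii) x ⊕ y ⊕ w ≠ 0 for every w < z; (iv) x ⊕ v ⊕ w ≠ 0 for all v < y and w < z with v = h(w). -/

import Mathlib

private lemma xor_div_pow (a b k : ℕ) : (a ^^^ b) / 2^k = a/2^k ^^^ b/2^k := by
  simp only [← Nat.shiftRight_eq_div_pow]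
  apply Nat.eq_of_testBit_eq
  simp [Nat.testBit_shiftRight, Nat.testBit_xor]

private lemma exists_level (a b : ℕ) (hab : a < b) :
    ∃ i, a / 2^(i+1) = b / 2^(i+1) ∧ b / 2^i = a / 2^i + 1 := by
  induction b using Nat.strong_induction_on generalizing a with
  | _ b ih =>
    by_cases hq : a / 2 = b / 2
    · refine ⟨0, ?_, ?_⟩ <;> simp <;> omega
    · have hq' : a / 2 < b / 2 := lt_of_le_of_ne (Nat.div_le_div_right hab.le) hq
      obtain ⟨i, h1, h2⟩ := ih (b/2) (Nat.div_lt_self (by omega) one_lt_two) (a/2) hq'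
      have e1 : ∀ n : ℕ, n / 2 / 2 ^ (i+1) = n / 2 ^ (i+2) := fun n => by
        rw [Nat.div_div_eq_div_mul]; congr 1; ring
      have e2 : ∀ n : ℕ, n / 2 / 2 ^ i = n / 2 ^ (i+1) := fun n => by
        rw [Nat.div_div_eq_div_mul, pow_succ, mul_comm]
      exact ⟨i+1, by rw [← e1, ← e1]; exact h1, by rw [← e2, ← e2]; exact h2⟩

private lemma xor_cancel_left' {a b c : ℕ} (h : a ^^^ b = a ^^^ c) : b = c := by
  have := congrArg (a ^^^ ·) h
  simpa [Nat.xor_assoc] using this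

/-- Condition (a): if `⌊z/2^i⌋ = ⌊z'/2^i⌋` for some `i ≥ 1`,
then `⌊h(z)/2^(i-1)⌋ = ⌊h(z')/2^(i-1)⌋`. -/
def CondA (h : ℕ → ℕ) : Prop :=
  ∀ z z' i : ℕ, 1 ≤ i → z / 2 ^ i = z' / 2 ^ i →
    h z / 2 ^ (i - 1) = h z' / 2 ^ (i - 1)

theorem stmt_6 (h : ℕ → ℕ) (hmono : Monotone h) (hA : CondA h)
    (x y z : ℕ) (hzero : x ^^^ y ^^^ z = 0) (hyz : y ≤ h z) :
    (∀ u < x, u ^^^ y ^^^ z ≠ 0) ∧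
    (∀ v < y, x ^^^ v ^^^ z ≠ 0) ∧
    (∀ w < z, x ^^^ y ^^^ w ≠ 0) ∧
    (∀ v < y, ∀ w < z, v = h w → x ^^^ v ^^^ w ≠ 0) := by
  have hx : x ^^^ y = z := by
    have := congrArg (· ^^^ z) hzero
    simpa [Nat.xor_assoc] using this
  refine ⟨?_, ?_, ?_, ?_⟩
  · intro u hu hc
    have hu' : u ^^^ y = z := by
      have := congrArg (· ^^^ z) hc
      simpa [Nat.xor_assoc] using this
    have : u ^^^ y = x ^^^ y := hu'.trans hx.symm
    have : u = x := by
      have := congrArg (· ^^^ y) this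
      simpa [Nat.xor_assoc] using this
    omega
  · intro v hv hc
    have hv' : x ^^^ v = z := by
      have := congrArg (· ^^^ z) hc
      simpa [Nat.xor_assoc] using this
    have : v = y := xor_cancel_left' (hv'.trans hx.symm)
    omega
  · intro w hw hc
    have : w = z := by
      have h1 : x ^^^ y ^^^ w = x ^^^ y ^^^ z := by rw [hc, hzero]
      exact xor_cancel_left' h1
    omega
  · intro v hv w hw hvw hc
    -- x ^^^ v = w, x ^^^ y = z, so y ^^^ v = z ^^^ w
    have hxw : x ^^^ v = w := by
      have := congrArg (· ^^^ w) hc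
      simpa [Nat.xor_assoc] using this
    have hd : y ^^^ v = z ^^^ w := by
      have : (x ^^^ y) ^^^ (x ^^^ v) = z ^^^ w := by rw [hx, hxw]
      calc y ^^^ v = (x ^^^ y) ^^^ (x ^^^ v) := by
            rw [Nat.xor_comm x y, Nat.xor_assoc, ← Nat.xor_assoc x x v,
              Nat.xor_self, Nat.zero_xor]
        _ = z ^^^ w := this
    obtain ⟨i, h1, h2⟩ := exists_level w z hw
    -- y and v agree above bit i
    have hd1 : (z ^^^ w) / 2^(i+1) = 0 := by
      rw [xor_div_pow, h1]; simp
    have hyv1 : y / 2^(i+1) = v / 2^(i+1) := by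
      have : y / 2^(i+1) ^^^ v / 2^(i+1) = 0 := by rw [← xor_div_pow, hd, hd1]
      exact Nat.xor_eq_zero_iff.mp this
    -- y/2^i ≠ v/2^i
    have hne : y / 2^i ≠ v / 2^i := by
      intro he
      have : (z ^^^ w) / 2^i = 0 := by
        rw [← hd, xor_div_pow, he]; simp
      rw [xor_div_pow] at this
      have := Nat.xor_eq_zero_iff.mp this
      omega
    have hle : v / 2^i ≤ y / 2^i := Nat.div_le_div_right hv.le
    have hhalf : y / 2^i / 2 = v / 2^i / 2 := by
      have e : ∀ n : ℕ, n / 2^i / 2 = n / 2^(i+1) := fun n => by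
        rw [Nat.div_div_eq_div_mul, pow_succ]
      rw [e, e, hyv1]
    have hstep : y / 2^i = v / 2^i + 1 := by omega
    -- condition (a): h w / 2^i = h z / 2^i
    have hha := hA w z (i+1) (by omega) h1
    simp only [Nat.add_sub_cancel] at hha
    have : y / 2^i ≤ h z / 2^i := Nat.div_le_div_right hyz
    rw [← hha, ← hvw] at this
    omega
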